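/- Let d be a positive integer. Define Ω_d = ∑_{ρ ∈ R_d} a_{1,ρ₁}⋯a_{d,ρ_d} where a_{i,j} = 2 if 1 ≤ j ≤ d+1-i, a_{i,j} = 1 if d+2-i ≤ j ≤ d+i, and a_{i,j} = 0 otherwise, and R_d is the set of injective sequences (ρ₁,…,ρ_d) with 1 ≤ ρ_i ≤ d+i. Then Ω_d = ∑_{m=0}^{d} C(d,m)·(m+1)^d. -/

import Mathlib

open Finset
attribute [local instance] Classical.propDecidable

noncomputable def Bcnt (d : ℕ) (t : Finset (Fin d)) (b : Fin d → ℕ) : Finset (Fin d → ℕ) :=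
  (Fintype.piFinset fun i => Finset.range (if i ∈ t then b i else 1)).filter
    fun ρ => Set.InjOn ρ ↑t

lemma mem_Bcnt {d : ℕ} {t : Finset (Fin d)} {b : Fin d → ℕ} {ρ : Fin d → ℕ} :
    ρ ∈ Bcnt d t b ↔ (∀ i, ρ i < if i ∈ t then b i else 1) ∧ Set.InjOn ρ ↑t := by
  simp [Bcnt, Fintype.mem_piFinset]

lemma card_Bcnt_erase {d : ℕ} (t : Finset (Fin d)) (b : Fin d → ℕ) {i0 : Fin d}
    (h0 : i0 ∈ t) (hmax : ∀ j ∈ t, b j ≤ b i0) :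
    (Bcnt d t b).card = (b i0 - (t.card - 1)) * (Bcnt d (t.erase i0) b).card := by
  have hmap : ∀ ρ ∈ Bcnt d t b, Function.update ρ i0 0 ∈ Bcnt d (t.erase i0) b := by
    intro ρ hρ
    rw [mem_Bcnt] at hρ ⊢
    obtain ⟨hb, hinj⟩ := hρ
    constructor
    · intro i
      by_cases hi : i = i0
      · subst hi
        simp [Function.update_self, Finset.notMem_erase]
      · rw [Function.update_of_ne hi]
        by_cases hit : i ∈ t
        · rw [if_pos (Finset.mem_erase.mpr ⟨hi, hit⟩)]
          have := hb i; rwa [if_pos hit] at this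
        · rw [if_neg (fun h => hit (Finset.mem_of_mem_erase h))]
          have := hb i; rwa [if_neg hit] at this
    · intro x hx y hy hxy
      simp only [Finset.coe_erase, Set.mem_diff, Set.mem_singleton_iff,
        Finset.mem_coe] at hx hy
      rw [Function.update_of_ne hx.2, Function.update_of_ne hy.2] at hxy
      exact hinj hx.1 hy.1 hxy
  rw [Finset.card_eq_sum_card_fiberwise hmap]
  have hfib : ∀ ρ' ∈ Bcnt d (t.erase i0) b,
      ((Bcnt d t b).filter fun ρ => Function.update ρ i0 0 = ρ').card
        = b i0 - (t.card - 1) := by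
    intro ρ' hρ'
    rw [mem_Bcnt] at hρ'
    obtain ⟨hb', hinj'⟩ := hρ'
    have hρ'i0 : ρ' i0 = 0 := by
      have := hb' i0
      rw [if_neg (Finset.notMem_erase i0 t)] at this
      omega
    have himsub : (t.erase i0).image ρ' ⊆ Finset.range (b i0) := by
      intro v hv
      rw [Finset.mem_image] at hv
      obtain ⟨j, hj, rfl⟩ := hv
      have := hb' j
      rw [if_pos hj] at this
      exact Finset.mem_range.mpr (lt_of_lt_of_le this (hmax j (Finset.mem_of_mem_erase hj)))
    have hkey : (Bcnt d t b).filter (fun ρ => Function.update ρ i0 0 = ρ')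
        = (Finset.range (b i0) \ (t.erase i0).image ρ').image
            (fun v => Function.update ρ' i0 v) := by
      ext ρ
      simp only [Finset.mem_filter, Finset.mem_image, Finset.mem_sdiff,
        Finset.mem_range]
      constructor
      · rintro ⟨hρ, hupd⟩
        rw [mem_Bcnt] at hρ
        obtain ⟨hb, hinj⟩ := hρ
        refine ⟨ρ i0, ⟨?_, ?_⟩, ?_⟩
        · have := hb i0; rwa [if_pos h0] at this
        · rintro ⟨j, hj, hji⟩
          have hjne : j ≠ i0 := Finset.ne_of_mem_erase hj
          have : ρ' j = ρ j := by
            rw [← hupd, Function.update_of_ne hjne]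
          rw [this] at hji
          exact hjne (hinj (Finset.mem_of_mem_erase hj) h0 hji)
        · funext i
          by_cases hi : i = i0
          · subst hi; rw [Function.update_self]
          · rw [Function.update_of_ne hi, ← hupd, Function.update_of_ne hi]
      · rintro ⟨v, ⟨hvlt, hvnim⟩, rfl⟩
        have hne : ∀ j ∈ t.erase i0, ρ' j ≠ v := by
          intro j hj hc
          exact hvnim ⟨j, hj, hc⟩
        constructor
        · rw [mem_Bcnt]
          constructor
          · intro i
            by_cases hi : i = i0
            · subst hi; rw [Function.update_self, if_pos h0]; exact hvlt
            · rw [Function.update_of_ne hi]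
              by_cases hit : i ∈ t
              · rw [if_pos hit]
                have := hb' i
                rwa [if_pos (Finset.mem_erase.mpr ⟨hi, hit⟩)] at this
              · rw [if_neg hit]
                have := hb' i
                rwa [if_neg (fun h => hit (Finset.mem_of_mem_erase h))] at this
          · intro x hx y hy hxy
            simp only [Finset.mem_coe] at hx hy
            by_cases hxi : x = i0 <;> by_cases hyi : y = i0
            · rw [hxi, hyi]
            · exfalso; subst hxi
              rw [Function.update_self, Function.update_of_ne hyi] at hxy
              exact hne y (Finset.mem_erase.mpr ⟨hyi, hy⟩) hxy.symm
            · exfalso; subst hyi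
              rw [Function.update_self, Function.update_of_ne hxi] at hxy
              exact hne x (Finset.mem_erase.mpr ⟨hxi, hx⟩) hxy
            · rw [Function.update_of_ne hxi, Function.update_of_ne hyi] at hxy
              exact hinj' (Finset.mem_coe.mpr (Finset.mem_erase.mpr ⟨hxi, hx⟩))
                (Finset.mem_coe.mpr (Finset.mem_erase.mpr ⟨hyi, hy⟩)) hxy
        · funext i
          by_cases hi : i = i0
          · subst hi
            rw [Function.update_self, hρ'i0]
          · rw [Function.update_of_ne hi, Function.update_of_ne hi]
    rw [hkey, Finset.card_image_of_injective _ (Function.update_injective ρ' i0),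
      Finset.card_sdiff_of_subset himsub,
      Finset.card_image_of_injOn hinj', Finset.card_range,
      Finset.card_erase_of_mem h0]
  rw [Finset.sum_congr rfl hfib, Finset.sum_const, smul_eq_mul, mul_comm]

lemma card_Bcnt {d : ℕ} (t : Finset (Fin d)) (b : Fin d → ℕ) (hbinj : Set.InjOn b ↑t) :
    (Bcnt d t b).card = ∏ i ∈ t, (b i - (t.filter fun j => b j < b i).card) := by
  induction t using Finset.strongInduction with
  | _ t ih =>
    rcases Finset.eq_empty_or_nonempty t with rfl | ht
    · simp [Bcnt, Set.injOn_empty]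
    · obtain ⟨i0, h0, hmax⟩ := Finset.exists_max_image t b ht
      rw [card_Bcnt_erase t b h0 hmax,
        ih (t.erase i0) (Finset.erase_ssubset h0)
          (hbinj.mono (by exact_mod_cast Finset.erase_subset i0 t)),
        ← Finset.mul_prod_erase t _ h0]
      congr 1
      · congr 1
        have : t.filter (fun j => b j < b i0) = t.erase i0 := by
          ext j
          simp only [Finset.mem_filter, Finset.mem_erase]
          constructor
          · rintro ⟨hj, hlt⟩
            exact ⟨fun h => by subst h; exact lt_irrefl _ hlt, hj⟩
          · rintro ⟨hne, hj⟩
            exact ⟨hj, lt_of_le_of_ne (hmax j hj)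
              (fun h => hne (hbinj hj h0 h))⟩
        rw [this, Finset.card_erase_of_mem h0]
      · apply Finset.prod_congr rfl
        intro i hi
        congr 1
        have : (t.erase i0).filter (fun j => b j < b i)
            = t.filter (fun j => b j < b i) := by
          ext j
          simp only [Finset.mem_filter, Finset.mem_erase]
          constructor
          · rintro ⟨⟨_, hj⟩, hlt⟩; exact ⟨hj, hlt⟩
          · rintro ⟨hj, hlt⟩
            refine ⟨⟨fun h => ?_, hj⟩, hlt⟩
            subst h
            exact absurd hlt (not_lt.mpr (hmax i (Finset.mem_of_mem_erase hi)))
        rw [this]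

noncomputable def wfac (T : Finset ℕ) (c : ℝ) (i : ℕ) : ℝ :=
  if i ∈ T then c - ((i : ℝ) - ((T.filter (· < i)).card : ℝ))
  else c + ((T.filter (· < i)).card : ℝ)

lemma wordSum_zero (n : ℕ) (c : ℝ) :
    ∑ T ∈ (Finset.range n).powerset.filter (fun T => T.card = 0),
      ∏ i ∈ Finset.range n, wfac T c i = c ^ n := by
  have : (Finset.range n).powerset.filter (fun T => T.card = 0) = {∅} := by
    ext T
    simp only [Finset.mem_filter, Finset.mem_powerset, Finset.card_eq_zero,
      Finset.mem_singleton]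
    exact ⟨fun h => h.2, fun h => ⟨by simp [h], h⟩⟩
  rw [this, Finset.sum_singleton]
  simp [wfac]

lemma wordSum (n : ℕ) : ∀ (s : ℕ) (c : ℝ),
    ∑ T ∈ (Finset.range n).powerset.filter (fun T => T.card = s),
      ∏ i ∈ Finset.range n, wfac T c i = (n.choose s : ℝ) * c ^ n := by
  induction n with
  | zero =>
    intro s c
    match s with
    | 0 => simpa using wordSum_zero 0 c
    | s + 1 => simp [Finset.filter_singleton]
  | succ n ih =>
    intro s c
    match s with
    | 0 => simpa using wordSum_zero (n+1) c
    | s + 1 =>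
      have hnotmem : n ∉ Finset.range n := by simp
      rw [Finset.range_add_one, Finset.powerset_insert, Finset.filter_union]
      rw [Finset.sum_union (by
        rw [Finset.disjoint_left]
        intro T hT hT'
        simp only [Finset.mem_filter, Finset.mem_powerset, Finset.mem_image] at hT hT'
        obtain ⟨⟨T', hT', rfl⟩, _⟩ := hT'
        exact hnotmem (hT.1 (Finset.mem_insert_self n T')))]
      -- first branch : T ⊆ range n, card s+1, n ∉ T
      have hb1 : ∑ T ∈ (Finset.range n).powerset.filter (fun T => T.card = s + 1),
          ∏ i ∈ insert n (Finset.range n), wfac T c i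
          = (c + (s+1 : ℝ)) * ((n.choose (s+1) : ℝ) * c ^ n) := by
        rw [← ih (s+1) c, Finset.mul_sum]
        apply Finset.sum_congr rfl
        intro T hT
        simp only [Finset.mem_filter, Finset.mem_powerset] at hT
        rw [Finset.prod_insert hnotmem]
        congr 1
        have hnT : n ∉ T := fun h => hnotmem (hT.1 h)
        have hfil : T.filter (· < n) = T := by
          apply Finset.filter_true_of_mem
          intro x hx
          exact Finset.mem_range.mp (hT.1 hx)
        rw [wfac, if_neg hnT, hfil, hT.2]
        push_cast; ring
      -- second branch : T = insert n T', T' ⊆ range n, card s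
      have himg : ((Finset.range n).powerset.image (insert n)).filter
            (fun T => T.card = s + 1)
          = ((Finset.range n).powerset.filter (fun T => T.card = s)).image (insert n) := by
        ext T
        simp only [Finset.mem_filter, Finset.mem_image, Finset.mem_powerset]
        constructor
        · rintro ⟨⟨T', hT', rfl⟩, hcard⟩
          refine ⟨T', ⟨hT', ?_⟩, rfl⟩
          have : n ∉ T' := fun h => hnotmem (hT' h)
          rw [Finset.card_insert_of_notMem this] at hcard
          omega
        · rintro ⟨T', ⟨hT', hc⟩, rfl⟩
          have : n ∉ T' := fun h => hnotmem (hT' h)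
          exact ⟨⟨T', hT', rfl⟩, by rw [Finset.card_insert_of_notMem this, hc]⟩
      have hinjins : ∀ T1 ∈ (Finset.range n).powerset.filter (fun T => T.card = s),
          ∀ T2 ∈ (Finset.range n).powerset.filter (fun T => T.card = s),
          insert n T1 = insert n T2 → T1 = T2 := by
        intro T1 h1 T2 h2 heq
        simp only [Finset.mem_filter, Finset.mem_powerset] at h1 h2
        have k1 : n ∉ T1 := fun h => hnotmem (h1.1 h)
        have k2 : n ∉ T2 := fun h => hnotmem (h2.1 h)
        have := congrArg (fun u => Finset.erase u n) heq
        simpa [Finset.erase_insert k1, Finset.erase_insert k2] using this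
      have hb2 : ∑ T ∈ ((Finset.range n).powerset.image (insert n)).filter
            (fun T => T.card = s + 1),
          ∏ i ∈ insert n (Finset.range n), wfac T c i
          = (c - ((n : ℝ) - (s : ℝ))) * ((n.choose s : ℝ) * c ^ n) := by
        rw [himg, Finset.sum_image hinjins, ← ih s c, Finset.mul_sum]
        apply Finset.sum_congr rfl
        intro T hT
        simp only [Finset.mem_filter, Finset.mem_powerset] at hT
        have hnT : n ∉ T := fun h => hnotmem (hT.1 h)
        rw [Finset.prod_insert hnotmem]
        have hfil : (insert n T).filter (· < n) = T := by
          ext x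
          simp only [Finset.mem_filter, Finset.mem_insert]
          constructor
          · rintro ⟨rfl | hx, hlt⟩
            · omega
            · exact hx
          · intro hx
            exact ⟨Or.inr hx, Finset.mem_range.mp (hT.1 hx)⟩
        have hfacn : wfac (insert n T) c n = c - ((n : ℝ) - (s : ℝ)) := by
          rw [wfac, if_pos (Finset.mem_insert_self n T), hfil, hT.2]
        rw [hfacn]
        congr 1
        apply Finset.prod_congr rfl
        intro i hi
        have hiln : i < n := Finset.mem_range.mp hi
        have hinT : i ∈ insert n T → i ∈ T := by
          intro h
          rcases Finset.mem_insert.mp h with rfl | h2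
          · omega
          · exact h2
        have hfili : (insert n T).filter (· < i) = T.filter (· < i) := by
          ext x
          simp only [Finset.mem_filter, Finset.mem_insert]
          constructor
          · rintro ⟨rfl | hx, hlt⟩
            · omega
            · exact ⟨hx, hlt⟩
          · rintro ⟨hx, hlt⟩
            exact ⟨Or.inr hx, hlt⟩
        rw [wfac, wfac]
        by_cases hiT : i ∈ T
        · rw [if_pos (Finset.mem_insert_of_mem hiT), if_pos hiT, hfili]
        · rw [if_neg (fun h => hiT (hinT h)), if_neg hiT, hfili]
      rw [hb1, hb2]
      have key : ((s : ℝ) + 1) * (n.choose (s+1) : ℝ) = ((n : ℝ) - s) * (n.choose s : ℝ) := by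
        rcases le_or_gt s n with h | h
        · have := Nat.choose_succ_right_eq n s
          have hc := congrArg (fun k : ℕ => (k : ℝ)) this
          push_cast [Nat.cast_sub h] at hc
          linarith [hc]
        · rw [Nat.choose_eq_zero_of_lt h, Nat.choose_eq_zero_of_lt (by omega)]
          push_cast
          ring
      have pascal : (((n+1).choose (s+1) : ℕ) : ℝ) = (n.choose s : ℝ) + (n.choose (s+1) : ℝ) := by
        exact_mod_cast (Nat.choose_succ_succ n s)
      rw [pascal]
      push_cast
      linear_combination c ^ n * key

def bndS (d : ℕ) (S : Finset (Fin d)) : Fin d → ℕ :=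
  fun i => if i ∈ S then d - i.val else d + i.val + 1

noncomputable def NS (d : ℕ) (S : Finset (Fin d)) : ℕ :=
  (((Finset.univ.filter (fun ρ : Fin d → Fin (2 * d) =>
      Function.Injective ρ ∧ ∀ i : Fin d, (ρ i : ℕ) ≤ d + (i : ℕ)))).filter
    (fun ρ => ∀ i ∈ S, (i : ℕ) + (ρ i : ℕ) < d)).card

lemma bndS_injOn (d : ℕ) (S : Finset (Fin d)) :
    Set.InjOn (bndS d S) ↑(Finset.univ : Finset (Fin d)) := by
  intro x _ y _ h
  have hx := x.isLt
  have hy := y.isLt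
  unfold bndS at h
  by_cases hxS : x ∈ S <;> by_cases hyS : y ∈ S <;>
    simp only [if_pos, if_neg, hxS, hyS, if_true, if_false] at h <;>
    (try exact Fin.ext (by omega)) <;> omega

lemma NS_eq_card_Bcnt (d : ℕ) (S : Finset (Fin d)) :
    NS d S = (Bcnt d Finset.univ (bndS d S)).card := by
  unfold NS
  apply Finset.card_bij (fun ρ _ => fun i => (ρ i : ℕ))
  · intro ρ hρ
    simp only [Finset.mem_filter, Finset.mem_univ, true_and] at hρ
    obtain ⟨⟨hinj, hle⟩, hS⟩ := hρ
    rw [mem_Bcnt]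
    constructor
    · intro i
      rw [if_pos (Finset.mem_univ i)]
      unfold bndS
      by_cases hiS : i ∈ S
      · rw [if_pos hiS]
        have := hS i hiS
        omega
      · rw [if_neg hiS]
        have := hle i
        omega
    · intro x _ y _ h
      exact hinj (Fin.val_injective h)
  · intro ρ1 h1 ρ2 h2 h
    funext i
    exact Fin.val_injective (congrFun h i)
  · intro g hg
    rw [mem_Bcnt] at hg
    obtain ⟨hb, hinj⟩ := hg
    have hlt : ∀ i, g i < 2 * d := by
      intro i
      have := hb i
      rw [if_pos (Finset.mem_univ i)] at this
      unfold bndS at this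
      have hi := i.isLt
      by_cases hiS : i ∈ S
      · rw [if_pos hiS] at this; omega
      · rw [if_neg hiS] at this; omega
    refine ⟨fun i => ⟨g i, hlt i⟩, ?_, ?_⟩
    · simp only [Finset.mem_filter, Finset.mem_univ, true_and]
      have hbv : ∀ i, g i < bndS d S i := by
        intro i
        have := hb i
        rwa [if_pos (Finset.mem_univ i)] at this
      refine ⟨⟨?_, ?_⟩, ?_⟩
      · intro x y h
        have : g x = g y := by
          simpa using congrArg Fin.val h
        exact hinj (Finset.mem_coe.mpr (Finset.mem_univ x))
          (Finset.mem_coe.mpr (Finset.mem_univ y)) this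
      · intro i
        have := hbv i
        unfold bndS at this
        have hi := i.isLt
        by_cases hiS : i ∈ S
        · rw [if_pos hiS] at this; simp; omega
        · rw [if_neg hiS] at this; simp; omega
      · intro i hiS
        have := hbv i
        unfold bndS at this
        rw [if_pos hiS] at this
        have hi := i.isLt
        simp; omega
    · rfl

lemma card_filter_val_lt (d : ℕ) (i : Fin d) :
    (Finset.univ.filter fun j : Fin d => (j : ℕ) < (i : ℕ)).card = (i : ℕ) := by
  conv_rhs => rw [← Finset.card_range (i : ℕ)]
  refine Finset.card_bij (fun j _ => (j : ℕ)) ?_ ?_ ?_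
  · intro j hj
    simp only [Finset.mem_filter] at hj
    exact Finset.mem_range.mpr hj.2
  · intro a _ b _ h
    exact Fin.val_injective h
  · intro x hx
    have hxd : x < d := lt_trans (Finset.mem_range.mp hx) i.isLt
    refine ⟨⟨x, hxd⟩, ?_, rfl⟩
    simp only [Finset.mem_filter, Finset.mem_univ, true_and]
    exact Finset.mem_range.mp hx

lemma card_filter_val_gt (d : ℕ) (i : Fin d) :
    (Finset.univ.filter fun j : Fin d => (i : ℕ) < (j : ℕ)).card = d - (i : ℕ) - 1 := by
  have h : d - (i : ℕ) - 1 = (Finset.Ico ((i : ℕ) + 1) d).card := by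
    rw [Nat.card_Ico]; omega
  rw [h]
  refine Finset.card_bij (fun j _ => (j : ℕ)) ?_ ?_ ?_
  · intro j hj
    simp only [Finset.mem_filter, Finset.mem_univ, true_and] at hj
    exact Finset.mem_Ico.mpr ⟨by omega, j.isLt⟩
  · intro a _ b _ h
    exact Fin.val_injective h
  · intro x hx
    rw [Finset.mem_Ico] at hx
    refine ⟨⟨x, hx.2⟩, ?_, rfl⟩
    simp only [Finset.mem_filter, Finset.mem_univ, true_and]
    omega

lemma filter_image_val {d : ℕ} (S : Finset (Fin d)) (k : ℕ) :
    ((S.image Fin.val).filter (· < k)).card = (S.filter fun j : Fin d => (j : ℕ) < k).card := by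
  rw [Finset.filter_image, Finset.card_image_of_injective _ Fin.val_injective]

lemma NS_real (d : ℕ) (S : Finset (Fin d)) :
    (NS d S : ℝ) = ∏ i ∈ Finset.range d,
      wfac (S.image Fin.val) ((d : ℝ) - (S.card : ℝ) + 1) i := by
  rw [NS_eq_card_Bcnt, card_Bcnt Finset.univ (bndS d S) (bndS_injOn d S),
    Nat.cast_prod, ← Fin.prod_univ_eq_prod_range]
  apply Finset.prod_congr rfl
  intro i _
  have hi := i.isLt
  have hcardS : S.card ≤ d := by
    simpa using Finset.card_le_card (Finset.subset_univ S)
  set c : ℝ := (d : ℝ) - (S.card : ℝ) + 1 with hc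
  set sb := (S.filter fun j : Fin d => (j : ℕ) < (i : ℕ)).card with hsb
  set sa := (S.filter fun j : Fin d => (i : ℕ) < (j : ℕ)).card with hsa
  have hsb_le : sb ≤ (i : ℕ) := by
    calc sb ≤ (Finset.univ.filter fun j : Fin d => (j : ℕ) < (i : ℕ)).card :=
          Finset.card_le_card (fun j hj => by
            simp only [Finset.mem_filter, Finset.mem_univ, true_and] at hj ⊢
            exact hj.2)
      _ = (i : ℕ) := card_filter_val_lt d i
  have hsa_le : sa ≤ d - (i : ℕ) - 1 := by
    calc sa ≤ (Finset.univ.filter fun j : Fin d => (i : ℕ) < (j : ℕ)).card :=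
          Finset.card_le_card (fun j hj => by
            simp only [Finset.mem_filter, Finset.mem_univ, true_and] at hj ⊢
            exact hj.2)
      _ = d - (i : ℕ) - 1 := card_filter_val_gt d i
  have hTfil := filter_image_val S (i : ℕ)
  by_cases hiS : i ∈ S
  · have hrank : (Finset.univ.filter fun j => bndS d S j < bndS d S i)
        = S.filter fun j : Fin d => (i : ℕ) < (j : ℕ) := by
      ext j
      have hj := j.isLt
      simp only [Finset.mem_filter, Finset.mem_univ, true_and]
      unfold bndS
      rw [if_pos hiS]
      by_cases hjS : j ∈ S
      · rw [if_pos hjS]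
        constructor
        · intro h; exact ⟨hjS, by omega⟩
        · intro h; omega
      · rw [if_neg hjS]
        constructor
        · intro h; omega
        · intro h; exact absurd h.1 hjS
    have hpart : sb + sa + 1 = S.card := by
      have hun : (S.filter fun j : Fin d => (j : ℕ) < (i : ℕ))
          ∪ (S.filter fun j : Fin d => (i : ℕ) < (j : ℕ)) = S.erase i := by
        ext j
        simp only [Finset.mem_union, Finset.mem_filter, Finset.mem_erase, Fin.ext_iff]
        constructor
        · rintro (⟨hj, hlt⟩ | ⟨hj, hlt⟩) <;> exact ⟨by omega, hj⟩
        · rintro ⟨hne, hj⟩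
          rcases Nat.lt_or_ge (j : ℕ) (i : ℕ) with h | h
          · exact Or.inl ⟨hj, h⟩
          · exact Or.inr ⟨hj, by omega⟩
      have hdisj : Disjoint (S.filter fun j : Fin d => (j : ℕ) < (i : ℕ))
          (S.filter fun j : Fin d => (i : ℕ) < (j : ℕ)) := by
        rw [Finset.disjoint_left]
        intro j hj1 hj2
        simp only [Finset.mem_filter] at hj1 hj2
        omega
      have hcu := Finset.card_union_of_disjoint hdisj
      rw [hun, Finset.card_erase_of_mem hiS] at hcu
      have hpos : 1 ≤ S.card := Finset.card_pos.mpr ⟨i, hiS⟩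
      omega
    have hmemT : (i : ℕ) ∈ S.image Fin.val := Finset.mem_image_of_mem _ hiS
    rw [hrank, wfac, if_pos hmemT, hTfil]
    unfold bndS
    rw [if_pos hiS, ← hsa, ← hsb]
    rw [Nat.cast_sub (by omega : sa ≤ d - (i : ℕ)), Nat.cast_sub (by omega : (i:ℕ) ≤ d)]
    rw [hc, ← hpart]
    push_cast
    ring
  · have hnotT : (i : ℕ) ∉ S.image Fin.val := by
      intro h
      rw [Finset.mem_image] at h
      obtain ⟨j, hj, hji⟩ := h
      exact hiS (Fin.val_injective hji ▸ hj)
    set nb := (Finset.univ.filter fun j : Fin d => j ∉ S ∧ (j : ℕ) < (i : ℕ)).card with hnb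
    have hsplit : sb + nb = (i : ℕ) := by
      have hun : (S.filter fun j : Fin d => (j : ℕ) < (i : ℕ))
          ∪ (Finset.univ.filter fun j : Fin d => j ∉ S ∧ (j : ℕ) < (i : ℕ))
          = Finset.univ.filter fun j : Fin d => (j : ℕ) < (i : ℕ) := by
        ext j
        simp only [Finset.mem_union, Finset.mem_filter, Finset.mem_univ, true_and]
        constructor
        · rintro (⟨_, hlt⟩ | ⟨_, hlt⟩) <;> exact hlt
        · intro hlt
          by_cases hjS : j ∈ S
          · exact Or.inl ⟨hjS, hlt⟩
          · exact Or.inr ⟨hjS, hlt⟩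
      have hdisj : Disjoint (S.filter fun j : Fin d => (j : ℕ) < (i : ℕ))
          (Finset.univ.filter fun j : Fin d => j ∉ S ∧ (j : ℕ) < (i : ℕ)) := by
        rw [Finset.disjoint_left]
        intro j hj1 hj2
        simp only [Finset.mem_filter, Finset.mem_univ, true_and] at hj1 hj2
        exact hj2.1 hj1.1
      have hcu := Finset.card_union_of_disjoint hdisj
      rw [hun, card_filter_val_lt d i] at hcu
      omega
    have hrank : (Finset.univ.filter fun j => bndS d S j < bndS d S i)
        = S ∪ (Finset.univ.filter fun j : Fin d => j ∉ S ∧ (j : ℕ) < (i : ℕ)) := by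
      ext j
      have hj := j.isLt
      simp only [Finset.mem_filter, Finset.mem_univ, true_and, Finset.mem_union]
      unfold bndS
      rw [if_neg hiS]
      by_cases hjS : j ∈ S
      · rw [if_pos hjS]
        constructor
        · intro _; exact Or.inl hjS
        · intro _; omega
      · rw [if_neg hjS]
        constructor
        · intro h
          exact Or.inr ⟨hjS, by omega⟩
        · rintro (h | h)
          · exact absurd h hjS
          · omega
    have hdisj2 : Disjoint S
        (Finset.univ.filter fun j : Fin d => j ∉ S ∧ (j : ℕ) < (i : ℕ)) := by
      rw [Finset.disjoint_left]
      intro j hj1 hj2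
      simp only [Finset.mem_filter, Finset.mem_univ, true_and] at hj2
      exact hj2.1 hj1
    rw [hrank, Finset.card_union_of_disjoint hdisj2, wfac, if_neg hnotT, hTfil]
    unfold bndS
    rw [if_neg hiS, ← hnb, ← hsb]
    rw [Nat.cast_sub (by omega : S.card + nb ≤ d + (i : ℕ) + 1)]
    rw [hc]
    have hnbr : (nb : ℝ) = ((i : ℕ) : ℝ) - (sb : ℝ) := by
      have h2 : (sb : ℝ) + (nb : ℝ) = ((i : ℕ) : ℝ) := by exact_mod_cast congrArg Nat.cast hsplit
      linarith
    push_cast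
    push_cast at hnbr
    rw [hnbr]
    ring

open Classical in
/-- The permanent-type sum `Ω_d(x)` of the `d × 2d` matrix `A_{d,x}`
(rows and columns here are 0-indexed: row `i`, column `j` correspond to
row `i+1`, column `j+1` of the paper, so the entry is `x` if `i+j+1 ≤ d`,
`1` if `d ≤ i+j` and `j ≤ d+i`, and `0` otherwise). The sum is over
injective sequences `ρ` with `ρ i ≤ d + i` (0-indexed form of `1 ≤ ρ_i ≤ d+i`). -/
noncomputable def Omega (d : ℕ) (x : ℝ) : ℝ :=
  ∑ ρ ∈ Finset.univ.filter (fun ρ : Fin d → Fin (2 * d) =>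
      Function.Injective ρ ∧ ∀ i : Fin d, (ρ i : ℕ) ≤ d + (i : ℕ)),
    ∏ i : Fin d,
      (if (i : ℕ) + (ρ i : ℕ) < d then x
       else if (ρ i : ℕ) ≤ d + (i : ℕ) then 1 else 0)

lemma Omega_two_eq_sum_NS (d : ℕ) :
    Omega d 2 = ∑ S ∈ (Finset.univ : Finset (Fin d)).powerset, (NS d S : ℝ) := by
  unfold Omega
  have hterm : ∀ ρ ∈ Finset.univ.filter (fun ρ : Fin d → Fin (2 * d) =>
      Function.Injective ρ ∧ ∀ i : Fin d, (ρ i : ℕ) ≤ d + (i : ℕ)),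
      (∏ i : Fin d, (if (i : ℕ) + (ρ i : ℕ) < d then (2:ℝ)
        else if (ρ i : ℕ) ≤ d + (i : ℕ) then 1 else 0))
      = ∑ S ∈ (Finset.univ : Finset (Fin d)).powerset,
          ∏ i ∈ S, (if (i : ℕ) + (ρ i : ℕ) < d then (1:ℝ) else 0) := by
    intro ρ hρ
    simp only [Finset.mem_filter, Finset.mem_univ, true_and] at hρ
    have h1 : ∀ i : Fin d, (if (i : ℕ) + (ρ i : ℕ) < d then (2:ℝ)
        else if (ρ i : ℕ) ≤ d + (i : ℕ) then 1 else 0)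
        = (if (i : ℕ) + (ρ i : ℕ) < d then (1:ℝ) else 0) + 1 := by
      intro i
      by_cases h : (i : ℕ) + (ρ i : ℕ) < d
      · rw [if_pos h, if_pos h]; norm_num
      · rw [if_neg h, if_neg h, if_pos (hρ.2 i)]; norm_num
    rw [Finset.prod_congr rfl (fun i _ => h1 i), Finset.prod_add]
    apply Finset.sum_congr rfl
    intro S _
    simp
  rw [Finset.sum_congr rfl hterm, Finset.sum_comm]
  apply Finset.sum_congr rfl
  intro S _
  rw [Finset.sum_congr rfl (fun ρ _ => Finset.prod_boole ..)]
  unfold NS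
  rw [Finset.card_filter]
  push_cast
  apply Finset.sum_congr rfl
  intro ρ _
  by_cases h : ∀ i ∈ S, (i : ℕ) + (ρ i : ℕ) < d
  · simp [h]
  · simp [h]

theorem kloeve_Omega_two (d : ℕ) (hd : 0 < d) :
    Omega d 2 = ∑ m ∈ Finset.range (d + 1),
      (Nat.choose d m : ℝ) * ((m : ℝ) + 1) ^ d := by
  rw [Omega_two_eq_sum_NS]
  have hmaps : ∀ S ∈ (Finset.univ : Finset (Fin d)).powerset,
      S.card ∈ Finset.range (d + 1) := by
    intro S _
    rw [Finset.mem_range]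
    have : S.card ≤ d := by simpa using Finset.card_le_card (Finset.subset_univ S)
    omega
  rw [← Finset.sum_fiberwise_of_maps_to hmaps (fun S => (NS d S : ℝ))]
  have hs : ∀ s ∈ Finset.range (d + 1),
      ∑ S ∈ (Finset.univ : Finset (Fin d)).powerset.filter (fun S => S.card = s),
        (NS d S : ℝ)
      = (d.choose s : ℝ) * ((d : ℝ) - (s : ℝ) + 1) ^ d := by
    intro s _
    rw [← wordSum d s ((d : ℝ) - (s : ℝ) + 1)]
    apply Finset.sum_bij (fun S _ => S.image Fin.val)
    · intro S hS
      simp only [Finset.mem_filter, Finset.mem_powerset] at hS ⊢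
      constructor
      · intro x hx
        rw [Finset.mem_image] at hx
        obtain ⟨j, _, rfl⟩ := hx
        exact Finset.mem_range.mpr j.isLt
      · rw [Finset.card_image_of_injective _ Fin.val_injective]
        exact hS.2
    · intro S1 h1 S2 h2 h
      exact Finset.image_injective Fin.val_injective h
    · intro T hT
      simp only [Finset.mem_filter, Finset.mem_powerset] at hT
      have hTd : ∀ m ∈ T, m < d := fun m hm => Finset.mem_range.mp (hT.1 hm)
      refine ⟨T.attachFin hTd, ?_, ?_⟩
      · simp only [Finset.mem_filter, Finset.mem_powerset]
        refine ⟨Finset.subset_univ _, ?_⟩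
        rw [Finset.card_attachFin]
        exact hT.2
      · ext x
        simp only [Finset.mem_image]
        constructor
        · rintro ⟨j, hj, rfl⟩
          exact (Finset.mem_attachFin hTd).mp hj
        · intro hx
          exact ⟨⟨x, hTd x hx⟩, (Finset.mem_attachFin hTd).mpr hx, rfl⟩
    · intro S hS
      simp only [Finset.mem_filter, Finset.mem_powerset] at hS
      rw [NS_real, hS.2]
  rw [Finset.sum_congr rfl hs, ← Finset.sum_range_reflect]
  apply Finset.sum_congr rfl
  intro m hm
  rw [Finset.mem_range] at hm
  have hmd : m ≤ d := by omega
  have h1 : d + 1 - 1 - m = d - m := by omega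
  rw [h1, Nat.choose_symm hmd, Nat.cast_sub hmd]
  ring
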